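/- For every ε ∈ (0,1) there exists a constant c(ε) > 0 such that the following holds. Let V be a finite set with |V| = n ≥ 2, let κ : V × V → ℝ be symmetric with κ ≥ 0, let t ∈ {1, …, n−1}, and let x : V × V → ℝ be symmetric with 0 ≤ x ≤ 1, x(i,i) = 0, x(i,j) + x(j,k) ≥ x(i,k) for all i,j,k ∈ V, and Σ_{j ∈ S} x(i,j) ≥ |S| − t for every S ⊆ V and every i ∈ S. Then there exists a partition of V into blocks each of size at most ⌊(1 + ε)t⌋ such that the total weight of crossing pairs satisfies Σ_{ {i,j} : i, j \text{ in different blocks} } κ(i,j) ≤ c(ε) · (log n) · Σ_{ {i,j} ⊆ V, i ≠ j } κ(i,j) x(i,j). -/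

import Mathlib

open scoped Classical
open Finset
set_option linter.unusedSectionVars false
set_option maxHeartbeats 1000000

noncomputable section AuxSL
variable {V : Type} [Fintype V] [DecidableEq V]

def ballF (x : V → V → ℝ) (A : Finset V) (v : V) (ρ : ℝ) : Finset V :=
  A.filter fun u => x v u ≤ ρ
def cutF (κ x : V → V → ℝ) (A : Finset V) (v : V) (ρ : ℝ) : ℝ :=
  ∑ u ∈ ballF x A v ρ, ∑ w ∈ A \ ballF x A v ρ, κ u w
def volF (κ x : V → V → ℝ) (W₀ : ℝ) (A : Finset V) (v : V) (ρ : ℝ) : ℝ :=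
  W₀ + (∑ u ∈ ballF x A v ρ, ∑ w ∈ ballF x A v ρ, κ u w * x u w)
     + ∑ u ∈ ballF x A v ρ, ∑ w ∈ A \ ballF x A v ρ, 2 * κ u w * (ρ - x v u)
def EF (κ x : V → V → ℝ) (A : Finset V) : ℝ :=
  ∑ u ∈ A, ∑ w ∈ A, κ u w * x u w

def crossF (κ : V → V → ℝ) (P : Finset (Finset V)) (A : Finset V) : ℝ :=
  ∑ u ∈ A, ∑ w ∈ A, if ∃ B ∈ P, u ∈ B ∧ w ∈ B then 0 else κ u w

lemma dsum_split (f : V → V → ℝ) (s t : Finset V) (h : Disjoint s t) :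
    ∑ u ∈ s ∪ t, ∑ w ∈ s ∪ t, f u w
      = ((∑ u ∈ s, ∑ w ∈ s, f u w) + (∑ u ∈ s, ∑ w ∈ t, f u w))
      + ((∑ u ∈ t, ∑ w ∈ s, f u w) + (∑ u ∈ t, ∑ w ∈ t, f u w)) := by
  rw [Finset.sum_union h]
  congr 1 <;> rw [← Finset.sum_add_distrib] <;>
    exact Finset.sum_congr rfl fun u _ => Finset.sum_union h

lemma comb_sum (κ x : V → V → ℝ) (v : V) (ρ ρ' : ℝ) (s t : Finset V) :
    (∑ u ∈ s, ∑ w ∈ t, 2 * κ u w * (ρ - x v u)) + 2 * (ρ' - ρ) * (∑ u ∈ s, ∑ w ∈ t, κ u w)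
      = ∑ u ∈ s, ∑ w ∈ t, 2 * κ u w * (ρ' - x v u) := by
  rw [Finset.mul_sum, ← Finset.sum_add_distrib]
  refine Finset.sum_congr rfl fun u _ => ?_
  rw [Finset.mul_sum, ← Finset.sum_add_distrib]
  exact Finset.sum_congr rfl fun w _ => by ring

-- vol_le : volume plus leftover energy is at most total
lemma vol_le (κ x : V → V → ℝ) (W₀ : ℝ) (A : Finset V) (v : V)
    (hκ0 : ∀ i j, 0 ≤ κ i j) (hκs : ∀ i j, κ i j = κ j i)
    (hxs : ∀ i j, x i j = x j i)
    (htri : ∀ i j k, x i k ≤ x i j + x j k) (ρ : ℝ) :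
    volF κ x W₀ A v ρ + EF κ x (A \ ballF x A v ρ) ≤ W₀ + EF κ x A := by
  set B := ballF x A v ρ with hBdef
  have hBA : B ⊆ A := Finset.filter_subset _ _
  have hAeq : (A \ B) ∪ B = A := Finset.sdiff_union_of_subset hBA
  have hdisj : Disjoint (A \ B) B := Finset.sdiff_disjoint
  have hEFsplit : EF κ x A
      = ((∑ u ∈ A \ B, ∑ w ∈ A \ B, κ u w * x u w) + (∑ u ∈ A \ B, ∑ w ∈ B, κ u w * x u w))
      + ((∑ u ∈ B, ∑ w ∈ A \ B, κ u w * x u w) + (∑ u ∈ B, ∑ w ∈ B, κ u w * x u w)) := by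
    conv_lhs => rw [EF, ← hAeq]
    exact dsum_split _ _ _ hdisj
  have hswap : (∑ u ∈ A \ B, ∑ w ∈ B, κ u w * x u w)
      = ∑ u ∈ B, ∑ w ∈ A \ B, κ u w * x u w := by
    rw [Finset.sum_comm]
    exact Finset.sum_congr rfl fun u _ => Finset.sum_congr rfl fun w _ => by
      rw [hκs w u, hxs w u]
  have hcutle : (∑ u ∈ B, ∑ w ∈ A \ B, 2 * κ u w * (ρ - x v u))
      ≤ ∑ u ∈ B, ∑ w ∈ A \ B, 2 * (κ u w * x u w) := by
    refine Finset.sum_le_sum fun u hu => Finset.sum_le_sum fun w hw => ?_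
    have hdu : x v u ≤ ρ := (Finset.mem_filter.mp hu).2
    have hdw : ¬ x v w ≤ ρ := by
      rw [Finset.mem_sdiff] at hw
      intro h; exact hw.2 (Finset.mem_filter.mpr ⟨hw.1, h⟩)
    push_neg at hdw
    have htr := htri v u w
    have := hκ0 u w
    nlinarith
  have h2 : (∑ u ∈ B, ∑ w ∈ A \ B, 2 * (κ u w * x u w))
      = (∑ u ∈ B, ∑ w ∈ A \ B, κ u w * x u w) + ∑ u ∈ B, ∑ w ∈ A \ B, κ u w * x u w := by
    rw [← Finset.sum_add_distrib]
    refine Finset.sum_congr rfl fun u _ => ?_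
    rw [← Finset.sum_add_distrib]
    exact Finset.sum_congr rfl fun w _ => by ring
  have hvol : volF κ x W₀ A v ρ = W₀ + (∑ u ∈ B, ∑ w ∈ B, κ u w * x u w)
      + ∑ u ∈ B, ∑ w ∈ A \ B, 2 * κ u w * (ρ - x v u) := rfl
  have hEF' : EF κ x (A \ B) = ∑ u ∈ A \ B, ∑ w ∈ A \ B, κ u w * x u w := rfl
  linarith [hEFsplit, hswap, hcutle, h2]

-- vol_step
lemma vol_step (κ x : V → V → ℝ) (W₀ : ℝ) (A : Finset V) (v : V)
    (hκ0 : ∀ i j, 0 ≤ κ i j) (hκs : ∀ i j, κ i j = κ j i)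
    (hxs : ∀ i j, x i j = x j i) (hx0 : ∀ i j, 0 ≤ x i j)
    (htri : ∀ i j k, x i k ≤ x i j + x j k)
    {ρ ρ' : ℝ} (hle : ρ ≤ ρ')
    (hgap : ∀ w ∈ A, ¬(ρ < x v w ∧ x v w < ρ')) :
    volF κ x W₀ A v ρ + 2 * (ρ' - ρ) * cutF κ x A v ρ ≤ volF κ x W₀ A v ρ' := by
  set B := ballF x A v ρ with hBdef
  set B' := ballF x A v ρ' with hB'def
  have hBA : B ⊆ A := Finset.filter_subset _ _
  have hB'A : B' ⊆ A := Finset.filter_subset _ _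
  have hBB' : B ⊆ B' := by
    intro u hu
    rw [hBdef, ballF, Finset.mem_filter] at hu
    exact Finset.mem_filter.mpr ⟨hu.1, le_trans hu.2 hle⟩
  have hN : ∀ w ∈ B' \ B, x v w = ρ' := by
    intro w hw
    rw [Finset.mem_sdiff] at hw
    have hw1 := Finset.mem_filter.mp hw.1
    have h2 : ρ < x v w := by
      by_contra h; push_neg at h
      exact hw.2 (Finset.mem_filter.mpr ⟨hw1.1, h⟩)
    rcases lt_or_eq_of_le hw1.2 with h | h
    · exact absurd ⟨h2, h⟩ (hgap w hw1.1)
    · exact h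
  have hB'eq : B ∪ (B' \ B) = B' := Finset.union_sdiff_of_subset hBB'
  have hdisjBN : Disjoint B (B' \ B) := Finset.disjoint_sdiff
  have hsdiff : (A \ B') ∪ (B' \ B) = A \ B := by
    ext u
    simp only [Finset.mem_union, Finset.mem_sdiff]
    constructor
    · rintro (⟨h1, h2⟩ | ⟨h1, h2⟩)
      · exact ⟨h1, fun h => h2 (hBB' h)⟩
      · exact ⟨hB'A h1, h2⟩
    · rintro ⟨h1, h2⟩
      by_cases h : u ∈ B'
      · exact Or.inr ⟨h, h2⟩
      · exact Or.inl ⟨h1, h⟩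
  have hdisj2 : Disjoint (A \ B') (B' \ B) := by
    rw [Finset.disjoint_left]
    intro u hu hu'
    exact (Finset.mem_sdiff.mp hu).2 (Finset.mem_sdiff.mp hu').1
  -- LHS combined
  have hLHS : volF κ x W₀ A v ρ + 2 * (ρ' - ρ) * cutF κ x A v ρ
      = W₀ + (∑ u ∈ B, ∑ w ∈ B, κ u w * x u w)
        + ∑ u ∈ B, ∑ w ∈ A \ B, 2 * κ u w * (ρ' - x v u) := by
    have h := comb_sum κ x v ρ ρ' B (A \ B)
    have hvol : volF κ x W₀ A v ρ = W₀ + (∑ u ∈ B, ∑ w ∈ B, κ u w * x u w)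
        + ∑ u ∈ B, ∑ w ∈ A \ B, 2 * κ u w * (ρ - x v u) := rfl
    have hcut : cutF κ x A v ρ = ∑ u ∈ B, ∑ w ∈ A \ B, κ u w := rfl
    rw [hvol, hcut]
    linarith [h]
  have hTsplit : (∑ u ∈ B, ∑ w ∈ A \ B, 2 * κ u w * (ρ' - x v u))
      = (∑ u ∈ B, ∑ w ∈ A \ B', 2 * κ u w * (ρ' - x v u))
        + ∑ u ∈ B, ∑ w ∈ B' \ B, 2 * κ u w * (ρ' - x v u) := by
    rw [← Finset.sum_add_distrib]
    refine Finset.sum_congr rfl fun u _ => ?_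
    rw [← Finset.sum_union hdisj2, hsdiff]
  -- RHS split
  have hvol' : volF κ x W₀ A v ρ' = W₀ + (∑ u ∈ B', ∑ w ∈ B', κ u w * x u w)
      + ∑ u ∈ B', ∑ w ∈ A \ B', 2 * κ u w * (ρ' - x v u) := rfl
  have hSsplit : (∑ u ∈ B', ∑ w ∈ B', κ u w * x u w)
      = ((∑ u ∈ B, ∑ w ∈ B, κ u w * x u w) + (∑ u ∈ B, ∑ w ∈ B' \ B, κ u w * x u w))
      + ((∑ u ∈ B' \ B, ∑ w ∈ B, κ u w * x u w)
        + (∑ u ∈ B' \ B, ∑ w ∈ B' \ B, κ u w * x u w)) := by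
    conv_lhs => rw [← hB'eq]
    exact dsum_split _ _ _ hdisjBN
  have hCutsplit : (∑ u ∈ B', ∑ w ∈ A \ B', 2 * κ u w * (ρ' - x v u))
      = (∑ u ∈ B, ∑ w ∈ A \ B', 2 * κ u w * (ρ' - x v u))
        + ∑ u ∈ B' \ B, ∑ w ∈ A \ B', 2 * κ u w * (ρ' - x v u) := by
    rw [← Finset.sum_union hdisjBN, hB'eq]
  -- key termwise bound
  have hT2 : (∑ u ∈ B, ∑ w ∈ B' \ B, 2 * κ u w * (ρ' - x v u))
      ≤ (∑ u ∈ B, ∑ w ∈ B' \ B, κ u w * x u w)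
        + ∑ u ∈ B' \ B, ∑ w ∈ B, κ u w * x u w := by
    have hS3 : (∑ u ∈ B' \ B, ∑ w ∈ B, κ u w * x u w)
        = ∑ u ∈ B, ∑ w ∈ B' \ B, κ w u * x w u := Finset.sum_comm
    rw [hS3, ← Finset.sum_add_distrib]
    refine Finset.sum_le_sum fun u hu => ?_
    rw [← Finset.sum_add_distrib]
    refine Finset.sum_le_sum fun w hw => ?_
    have h1 : x v w = ρ' := hN w hw
    have h2 : x v w ≤ x v u + x u w := htri v u w
    have h3 := hκ0 u w
    rw [hκs w u, hxs w u]
    nlinarith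
  have hS4 : 0 ≤ ∑ u ∈ B' \ B, ∑ w ∈ B' \ B, κ u w * x u w :=
    Finset.sum_nonneg fun u _ => Finset.sum_nonneg fun w _ =>
      mul_nonneg (hκ0 u w) (hx0 u w)
  have hT3 : 0 ≤ ∑ u ∈ B' \ B, ∑ w ∈ A \ B', 2 * κ u w * (ρ' - x v u) := by
    refine Finset.sum_nonneg fun u hu => Finset.sum_nonneg fun w _ => ?_
    have h1 : x v u = ρ' := hN u hu
    have := hκ0 u w
    nlinarith
  rw [hLHS, hTsplit, hvol', hSsplit, hCutsplit]
  linarith [hT2, hS4, hT3]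

lemma vol_lower (κ x : V → V → ℝ) (W₀ : ℝ) (A : Finset V) (v : V)
    (hκ0 : ∀ i j, 0 ≤ κ i j) (hx0 : ∀ i j, 0 ≤ x i j) (ρ : ℝ) :
    W₀ ≤ volF κ x W₀ A v ρ := by
  unfold volF
  have h1 : 0 ≤ ∑ u ∈ ballF x A v ρ, ∑ w ∈ ballF x A v ρ, κ u w * x u w :=
    Finset.sum_nonneg fun u _ => Finset.sum_nonneg fun w _ => mul_nonneg (hκ0 u w) (hx0 u w)
  have h2 : 0 ≤ ∑ u ∈ ballF x A v ρ, ∑ w ∈ A \ ballF x A v ρ, 2 * κ u w * (ρ - x v u) := by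
    refine Finset.sum_nonneg fun u hu => Finset.sum_nonneg fun w _ => ?_
    have hd : x v u ≤ ρ := (Finset.mem_filter.mp hu).2
    have := hκ0 u w
    nlinarith
  linarith

lemma EF_nonneg (κ x : V → V → ℝ) (hκ0 : ∀ i j, 0 ≤ κ i j) (hx0 : ∀ i j, 0 ≤ x i j)
    (A : Finset V) : 0 ≤ EF κ x A :=
  Finset.sum_nonneg fun u _ => Finset.sum_nonneg fun w _ => mul_nonneg (hκ0 u w) (hx0 u w)

lemma EF_mono (κ x : V → V → ℝ) (hκ0 : ∀ i j, 0 ≤ κ i j) (hx0 : ∀ i j, 0 ≤ x i j)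
    {A A' : Finset V} (h : A ⊆ A') : EF κ x A ≤ EF κ x A' := by
  unfold EF
  calc ∑ u ∈ A, ∑ w ∈ A, κ u w * x u w
      ≤ ∑ u ∈ A, ∑ w ∈ A', κ u w * x u w :=
        Finset.sum_le_sum fun u _ =>
          Finset.sum_le_sum_of_subset_of_nonneg h fun w _ _ => mul_nonneg (hκ0 u w) (hx0 u w)
    _ ≤ ∑ u ∈ A', ∑ w ∈ A', κ u w * x u w :=
        Finset.sum_le_sum_of_subset_of_nonneg h fun u _ _ =>
          Finset.sum_nonneg fun w _ => mul_nonneg (hκ0 u w) (hx0 u w)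

lemma exp_le_inv_one_sub {z : ℝ} (h1 : z < 1) :
    Real.exp z ≤ 1 / (1 - z) := by
  have h := Real.add_one_le_exp (-z)
  rw [Real.exp_neg] at h
  have hpos : 0 < Real.exp z := Real.exp_pos z
  rw [le_div_iff₀ (by linarith)]
  calc Real.exp z * (1 - z) = Real.exp z * (-z + 1) := by ring
    _ ≤ Real.exp z * (Real.exp z)⁻¹ := mul_le_mul_of_nonneg_left h hpos.le
    _ = 1 := mul_inv_cancel₀ (ne_of_gt hpos)

lemma chainP (P : ℝ → ℝ → Prop) (Prefl : ∀ c, P c c)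
    (Ptrans : ∀ c d e, P c d → P d e → P c e)
    (T : Finset ℝ) (a : ℝ) (ha : a ∈ T) (hlb : ∀ y ∈ T, a ≤ y)
    (step : ∀ ρ ρ', ρ ∈ T → ρ' ∈ T → ρ < ρ' → (∀ y ∈ T, ¬(ρ < y ∧ y < ρ')) → P ρ ρ') :
    ∀ b ∈ T, P a b := by
  have key : ∀ k (m : ℝ), m ∈ T → (T.filter (· < m)).card ≤ k → P a m := by
    intro k
    induction k with
    | zero =>
      intro m hm hc
      rcases eq_or_lt_of_le (hlb m hm) with h | h
      · exact h ▸ Prefl a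
      · exfalso
        have h1 : a ∈ T.filter (· < m) := Finset.mem_filter.mpr ⟨ha, h⟩
        have := Finset.card_pos.mpr ⟨a, h1⟩
        omega
    | succ k ih =>
      intro m hm hc
      rcases eq_or_lt_of_le (hlb m hm) with h | h
      · exact h ▸ Prefl a
      · have hne : (T.filter (· < m)).Nonempty := ⟨a, Finset.mem_filter.mpr ⟨ha, h⟩⟩
        set m' := (T.filter (· < m)).max' hne with hm'def
        have hm'mem := (T.filter (· < m)).max'_mem hne
        have hm'T : m' ∈ T := (Finset.mem_filter.mp hm'mem).1
        have hm'lt : m' < m := (Finset.mem_filter.mp hm'mem).2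
        have hsub : T.filter (· < m') ⊆ T.filter (· < m) := by
          intro y hy
          rw [Finset.mem_filter] at hy ⊢
          exact ⟨hy.1, lt_trans hy.2 hm'lt⟩
        have hnotmem : m' ∉ T.filter (· < m') := by simp
        have hcard : (T.filter (· < m')).card ≤ k := by
          have hss : T.filter (· < m') ⊂ T.filter (· < m) := by
            rw [Finset.ssubset_iff_of_subset hsub]
            exact ⟨m', hm'mem, hnotmem⟩
          have := Finset.card_lt_card hss
          omega
        have hPam' := ih m' hm'T hcard
        have hstep : P m' m := by
          refine step m' m hm'T hm hm'lt ?_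
          rintro y hy ⟨hy1, hy2⟩
          have hyf : y ∈ T.filter (· < m) := Finset.mem_filter.mpr ⟨hy, hy2⟩
          exact absurd (Finset.le_max' _ y hyf) (not_le.mpr hy1)
        exact Ptrans a m' m hPam' hstep
  intro b hb
  exact key _ b hb le_rfl

lemma interval_growth (κ x : V → V → ℝ) (W₀ : ℝ) (A : Finset V) (v : V)
    (hκ0 : ∀ i j, 0 ≤ κ i j) (hκs : ∀ i j, κ i j = κ j i)
    (hxs : ∀ i j, x i j = x j i) (hx0 : ∀ i j, 0 ≤ x i j)
    (htri : ∀ i j k, x i k ≤ x i j + x j k)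
    (r C : ℝ) (hC : 0 < C) (hW : 0 < W₀)
    (H : ∀ σ, 0 ≤ σ → σ < r → C * volF κ x W₀ A v σ < cutF κ x A v σ)
    {ρ ρ' : ℝ} (hρ0 : 0 ≤ ρ) (hlt : ρ < ρ') (hρ'r : ρ' ≤ r)
    (hgap : ∀ w ∈ A, ¬(ρ < x v w ∧ x v w < ρ')) :
    volF κ x W₀ A v ρ * Real.exp (2 * C * (ρ' - ρ)) ≤ volF κ x W₀ A v ρ' := by
  have hρr : ρ < r := lt_of_lt_of_le hlt hρ'r
  set c := cutF κ x A v ρ with hcdef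
  set vρ := volF κ x W₀ A v ρ with hvdef
  have h1 : C * vρ < c := H ρ hρ0 hρr
  have hvW : W₀ ≤ vρ := vol_lower κ x W₀ A v hκ0 hx0 ρ
  have hv0 : 0 < vρ := lt_of_lt_of_le hW hvW
  have hc0 : 0 < c := lt_trans (mul_pos hC hv0) h1
  have key : 2 * C * c * (ρ' - ρ) ≤ c - C * vρ := by
    by_contra hcon
    push_neg at hcon
    set δ := (c - C * vρ) / (2 * C * c) with hδdef
    have h2Cc : 0 < 2 * C * c := by positivity
    have hδ0 : 0 ≤ δ := div_nonneg (by linarith) h2Cc.le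
    have hδlt : δ < ρ' - ρ := (div_lt_iff₀ h2Cc).mpr (by nlinarith)
    have hBeq : ballF x A v (ρ + δ) = ballF x A v ρ := by
      ext u
      simp only [ballF, Finset.mem_filter]
      constructor
      · rintro ⟨huA, hud⟩
        refine ⟨huA, ?_⟩
        by_contra hcon2
        push_neg at hcon2
        exact hgap u huA ⟨hcon2, by linarith⟩
      · rintro ⟨huA, hud⟩
        exact ⟨huA, by linarith⟩
    have hcuteq : cutF κ x A v (ρ + δ) = c := by
      rw [hcdef]
      unfold cutF
      rw [hBeq]
    have hvoleq : volF κ x W₀ A v (ρ + δ) = vρ + 2 * δ * c := by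
      rw [hvdef, hcdef]
      unfold volF cutF
      rw [hBeq]
      have h := comb_sum κ x v ρ (ρ + δ) (ballF x A v ρ) (A \ ballF x A v ρ)
      linear_combination -h
    have hσ := H (ρ + δ) (by linarith) (by linarith)
    rw [hcuteq, hvoleq] at hσ
    have hδval : 2 * C * c * δ = c - C * vρ := by
      rw [hδdef]
      field_simp
    nlinarith
  have hz1 : 2 * C * (ρ' - ρ) < 1 := by
    have h' : 2 * C * (ρ' - ρ) * c < 1 * c := by nlinarith [mul_pos hC hv0]
    exact lt_of_mul_lt_mul_right h' hc0.le
  have hz0 : 0 ≤ 2 * C * (ρ' - ρ) := by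
    have : 0 ≤ ρ' - ρ := by linarith
    positivity
  have hstep := vol_step κ x W₀ A v hκ0 hκs hxs hx0 htri hlt.le hgap
  have hexp := exp_le_inv_one_sub hz1
  have hfrac : vρ * (1 / (1 - 2 * C * (ρ' - ρ))) ≤ vρ + 2 * (ρ' - ρ) * c := by
    rw [mul_one_div, div_le_iff₀ (by linarith)]
    have hΔ : 0 ≤ ρ' - ρ := by linarith
    nlinarith [mul_nonneg hΔ (by linarith [key] : (0:ℝ) ≤ c - C * vρ - 2 * C * c * (ρ' - ρ))]
  calc vρ * Real.exp (2 * C * (ρ' - ρ)) ≤ vρ * (1 / (1 - 2 * C * (ρ' - ρ))) :=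
        mul_le_mul_of_nonneg_left hexp hv0.le
    _ ≤ vρ + 2 * (ρ' - ρ) * c := hfrac
    _ ≤ volF κ x W₀ A v ρ' := hstep


lemma exists_good (κ x : V → V → ℝ) (W₀ : ℝ) (A : Finset V) (v : V)
    (hκ0 : ∀ i j, 0 ≤ κ i j) (hκs : ∀ i j, κ i j = κ j i)
    (hxs : ∀ i j, x i j = x j i) (hx0 : ∀ i j, 0 ≤ x i j)
    (htri : ∀ i j k, x i k ≤ x i j + x j k)
    (r C : ℝ) (hr : 0 < r) (hC : 0 < C) (hW : 0 < W₀)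
    (hgrow : W₀ + EF κ x A < W₀ * Real.exp (2 * C * r)) :
    ∃ ρ, 0 ≤ ρ ∧ ρ < r ∧ cutF κ x A v ρ ≤ C * volF κ x W₀ A v ρ := by
  by_contra hcon
  push_neg at hcon
  set T : Finset ℝ :=
    insert 0 (insert r ((A.image (x v)).filter fun y => 0 < y ∧ y < r)) with hTdef
  have h0T : (0:ℝ) ∈ T := Finset.mem_insert_self _ _
  have hrT : r ∈ T := Finset.mem_insert_of_mem (Finset.mem_insert_self _ _)
  have hlb : ∀ y ∈ T, 0 ≤ y := by
    intro y hy
    rw [hTdef] at hy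
    simp only [Finset.mem_insert, Finset.mem_filter] at hy
    rcases hy with h | h | h
    · exact le_of_eq h.symm
    · exact h ▸ hr.le
    · exact h.2.1.le
  have hub : ∀ y ∈ T, y ≤ r := by
    intro y hy
    rw [hTdef] at hy
    simp only [Finset.mem_insert, Finset.mem_filter] at hy
    rcases hy with h | h | h
    · exact h ▸ hr.le
    · exact le_of_eq h
    · exact h.2.2.le
  have main := chainP
    (fun a b => volF κ x W₀ A v a * Real.exp (2 * C * (b - a)) ≤ volF κ x W₀ A v b)
    (fun a => by
      rw [sub_self, mul_zero, Real.exp_zero, mul_one])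
    (fun a b c h1 h2 => by
      have e2 : (0:ℝ) < Real.exp (2 * C * (c - b)) := Real.exp_pos _
      have h3 := mul_le_mul_of_nonneg_right h1 e2.le
      rw [mul_assoc, ← Real.exp_add] at h3
      have harg : 2 * C * (b - a) + 2 * C * (c - b) = 2 * C * (c - a) := by ring
      rw [harg] at h3
      exact h3.trans h2)
    T 0 h0T hlb
    (fun ρ ρ' hρT hρ'T hlt hgapT => by
      refine interval_growth κ x W₀ A v hκ0 hκs hxs hx0 htri r C hC hW hcon
        (hlb ρ hρT) hlt (hub ρ' hρ'T) ?_
      rintro w hw ⟨hg1, hg2⟩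
      have hx : x v w ∈ T := by
        rw [hTdef]
        refine Finset.mem_insert_of_mem (Finset.mem_insert_of_mem ?_)
        refine Finset.mem_filter.mpr ⟨Finset.mem_image_of_mem _ hw, ?_, ?_⟩
        · exact lt_of_le_of_lt (hlb ρ hρT) hg1
        · exact lt_of_lt_of_le hg2 (hub ρ' hρ'T)
      exact hgapT _ hx ⟨hg1, hg2⟩)
    r hrT
  have h1 : W₀ * Real.exp (2 * C * r) ≤ volF κ x W₀ A v 0 * Real.exp (2 * C * (r - 0)) := by
    rw [sub_zero]
    exact mul_le_mul_of_nonneg_right (vol_lower κ x W₀ A v hκ0 hx0 0) (Real.exp_pos _).le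
  have h2 : volF κ x W₀ A v r + EF κ x (A \ ballF x A v r) ≤ W₀ + EF κ x A :=
    vol_le κ x W₀ A v hκ0 hκs hxs htri r
  have h3 : 0 ≤ EF κ x (A \ ballF x A v r) := EF_nonneg κ x hκ0 hx0 _
  linarith

lemma cut_zero (κ x : V → V → ℝ) (A : Finset V) (v : V)
    (hκ0 : ∀ i j, 0 ≤ κ i j) (hx0 : ∀ i j, 0 ≤ x i j)
    (htri : ∀ i j k, x i k ≤ x i j + x j k)
    (hE : EF κ x (Finset.univ : Finset V) = 0) : cutF κ x A v 0 = 0 := by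
  have hterm : ∀ i j : V, κ i j * x i j = 0 := by
    intro i j
    have h1 : ∀ u ∈ (Finset.univ : Finset V), (0:ℝ) ≤ ∑ w ∈ Finset.univ, κ u w * x u w :=
      fun u _ => Finset.sum_nonneg fun w _ => mul_nonneg (hκ0 u w) (hx0 u w)
    have h2 := (Finset.sum_eq_zero_iff_of_nonneg h1).mp hE i (Finset.mem_univ i)
    exact (Finset.sum_eq_zero_iff_of_nonneg
      (fun w _ => mul_nonneg (hκ0 i w) (hx0 i w))).mp h2 j (Finset.mem_univ j)
  unfold cutF
  refine Finset.sum_eq_zero fun u hu => Finset.sum_eq_zero fun w hw => ?_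
  have hu' : x v u ≤ 0 := (Finset.mem_filter.mp hu).2
  have hu0 : x v u = 0 := le_antisymm hu' (hx0 v u)
  have hw' : ¬ x v w ≤ 0 := by
    rw [Finset.mem_sdiff] at hw
    exact fun h => hw.2 (Finset.mem_filter.mpr ⟨hw.1, h⟩)
  by_contra hκne
  have hxuw : x u w = 0 := by
    rcases mul_eq_zero.mp (hterm u w) with h | h
    · exact absurd h hκne
    · exact h
  refine hw' ?_
  calc x v w ≤ x v u + x u w := htri v u w
    _ = 0 := by rw [hu0, hxuw]; ring


lemma main_ind (κ x : V → V → ℝ) (W₀ C r : ℝ) (K : ℕ)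
    (hκ0 : ∀ i j, 0 ≤ κ i j) (hκs : ∀ i j, κ i j = κ j i)
    (hxs : ∀ i j, x i j = x j i) (hx0 : ∀ i j, 0 ≤ x i j)
    (hxd : ∀ i, x i i = 0)
    (htri : ∀ i j k, x i k ≤ x i j + x j k)
    (hW : 0 ≤ W₀) (hC : 0 ≤ C)
    (Hex : ∀ (A : Finset V) (v : V), v ∈ A →
      ∃ ρ, 0 ≤ ρ ∧ ρ < r ∧ cutF κ x A v ρ ≤ C * volF κ x W₀ A v ρ)
    (Hsize : ∀ (A : Finset V) (v : V) (ρ : ℝ), v ∈ A → 0 ≤ ρ → ρ < r →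
      (ballF x A v ρ).card ≤ K) :
    ∀ (N : ℕ) (A : Finset V), A.card ≤ N →
      ∃ P : Finset (Finset V),
        (∀ B ∈ P, B.Nonempty) ∧ (P.sup id = A) ∧
        ((P : Set (Finset V)).PairwiseDisjoint id) ∧
        (∀ B ∈ P, B.card ≤ K) ∧
        crossF κ P A ≤ 2 * C * (EF κ x A + A.card * W₀) := by
  intro N
  induction N with
  | zero =>
    intro A hA
    have hAe : A = ∅ := Finset.card_eq_zero.mp (Nat.le_zero.mp hA)
    subst hAe
    refine ⟨∅, by simp, by simp, by simp, by simp, ?_⟩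
    simp [crossF, EF]
  | succ N ih =>
    intro A hA
    rcases Finset.eq_empty_or_nonempty A with rfl | ⟨v, hv⟩
    · refine ⟨∅, by simp, by simp, by simp, by simp, ?_⟩
      simp [crossF, EF]
    obtain ⟨ρ, hρ0, hρr, hcut⟩ := Hex A v hv
    set B := ballF x A v ρ with hBdef
    have hBA : B ⊆ A := Finset.filter_subset _ _
    have hvB : v ∈ B := Finset.mem_filter.mpr ⟨hv, by rw [hxd]; exact hρ0⟩
    have hssub : A \ B ⊂ A := by
      refine Finset.sdiff_ssubset hBA ⟨v, hvB⟩
    have hcardlt : (A \ B).card < A.card := Finset.card_lt_card hssub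
    have hA' : (A \ B).card ≤ N := by omega
    obtain ⟨P', hne', hsup', hdisj', hK', hcross'⟩ := ih (A \ B) hA'
    have hsubA' : ∀ D ∈ P', D ⊆ A \ B := by
      intro D hD
      have h := Finset.le_sup (f := id) hD
      rw [hsup'] at h
      exact h
    refine ⟨insert B P', ?_, ?_, ?_, ?_, ?_⟩
    · intro D hD
      rcases Finset.mem_insert.mp hD with rfl | hD'
      · exact ⟨v, hvB⟩
      · exact hne' D hD'
    · rw [Finset.sup_insert, hsup']
      show B ⊔ (A \ B) = A
      rw [Finset.sup_eq_union, Finset.union_sdiff_of_subset hBA]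
    · rw [Finset.coe_insert]
      refine Set.PairwiseDisjoint.insert hdisj' ?_
      intro D hD hne
      have hD' : D ∈ P' := hD
      exact Finset.disjoint_sdiff.mono_right
        (Finset.le_iff_subset.mpr (hsubA' D hD'))
    · intro D hD
      rcases Finset.mem_insert.mp hD with rfl | hD'
      · exact Hsize A v ρ hv hρ0 hρr
      · exact hK' D hD'
    · -- the crossing bound
      have hAeq : (A \ B) ∪ B = A := Finset.sdiff_union_of_subset hBA
      have hdisjAB : Disjoint (A \ B) B := Finset.sdiff_disjoint
      have hsplit : crossF κ (insert B P') A
          = ((∑ u ∈ A \ B, ∑ w ∈ A \ B,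
                if ∃ D ∈ insert B P', u ∈ D ∧ w ∈ D then 0 else κ u w)
            + (∑ u ∈ A \ B, ∑ w ∈ B,
                if ∃ D ∈ insert B P', u ∈ D ∧ w ∈ D then 0 else κ u w))
          + ((∑ u ∈ B, ∑ w ∈ A \ B,
                if ∃ D ∈ insert B P', u ∈ D ∧ w ∈ D then 0 else κ u w)
            + (∑ u ∈ B, ∑ w ∈ B,
                if ∃ D ∈ insert B P', u ∈ D ∧ w ∈ D then 0 else κ u w)) := by
        conv_lhs => rw [crossF, ← hAeq]
        exact dsum_split _ _ _ hdisjAB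
      have hBB : (∑ u ∈ B, ∑ w ∈ B,
          if ∃ D ∈ insert B P', u ∈ D ∧ w ∈ D then 0 else κ u w) = 0 := by
        refine Finset.sum_eq_zero fun u hu => Finset.sum_eq_zero fun w hw => ?_
        rw [if_pos ⟨B, Finset.mem_insert_self _ _, hu, hw⟩]
      have hBC : (∑ u ∈ B, ∑ w ∈ A \ B,
          if ∃ D ∈ insert B P', u ∈ D ∧ w ∈ D then 0 else κ u w) ≤ cutF κ x A v ρ := by
        refine Finset.sum_le_sum fun u hu => Finset.sum_le_sum fun w hw => ?_
        split_ifs with h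
        · exact hκ0 u w
        · exact le_rfl
      have hCB : (∑ u ∈ A \ B, ∑ w ∈ B,
          if ∃ D ∈ insert B P', u ∈ D ∧ w ∈ D then 0 else κ u w) ≤ cutF κ x A v ρ := by
        have hle : (∑ u ∈ A \ B, ∑ w ∈ B,
            if ∃ D ∈ insert B P', u ∈ D ∧ w ∈ D then 0 else κ u w)
            ≤ ∑ u ∈ A \ B, ∑ w ∈ B, κ u w := by
          refine Finset.sum_le_sum fun u hu => Finset.sum_le_sum fun w hw => ?_
          split_ifs with h
          · exact hκ0 u w
          · exact le_rfl
        have heq : (∑ u ∈ A \ B, ∑ w ∈ B, κ u w) = cutF κ x A v ρ := by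
          unfold cutF
          rw [← hBdef, Finset.sum_comm]
          exact Finset.sum_congr rfl fun u _ => Finset.sum_congr rfl fun w _ => hκs w u
        linarith
      have hCC : (∑ u ∈ A \ B, ∑ w ∈ A \ B,
          if ∃ D ∈ insert B P', u ∈ D ∧ w ∈ D then 0 else κ u w)
          ≤ crossF κ P' (A \ B) := by
        unfold crossF
        refine Finset.sum_le_sum fun u hu => Finset.sum_le_sum fun w hw => ?_
        by_cases h : ∃ D ∈ P', u ∈ D ∧ w ∈ D
        · obtain ⟨D, hD, h1, h2⟩ := h
          rw [if_pos ⟨D, Finset.mem_insert_of_mem hD, h1, h2⟩, if_pos ⟨D, hD, h1, h2⟩]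
        · rw [if_neg h]
          split_ifs with h2
          · exact hκ0 u w
          · exact le_rfl
      have hvol_le := vol_le κ x W₀ A v hκ0 hκs hxs htri ρ
      have hcardle : ((A \ B).card : ℝ) + 1 ≤ (A.card : ℝ) := by exact_mod_cast hcardlt
      have hinner : volF κ x W₀ A v ρ + (EF κ x (A \ B) + ((A \ B).card : ℝ) * W₀)
          ≤ EF κ x A + (A.card : ℝ) * W₀ := by nlinarith
      calc crossF κ (insert B P') A
          ≤ 2 * cutF κ x A v ρ + crossF κ P' (A \ B) := by
            rw [hsplit]; linarith
        _ ≤ 2 * (C * volF κ x W₀ A v ρ)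
              + 2 * C * (EF κ x (A \ B) + ((A \ B).card : ℝ) * W₀) := by linarith
        _ = 2 * C * (volF κ x W₀ A v ρ
              + (EF κ x (A \ B) + ((A \ B).card : ℝ) * W₀)) := by ring
        _ ≤ 2 * C * (EF κ x A + (A.card : ℝ) * W₀) :=
            mul_le_mul_of_nonneg_left hinner (by linarith)

end AuxSL

/-- Single-layer rounding theorem: for every `ε ∈ (0,1)` there is a constant `c(ε) > 0`
such that for every finite `V` with `|V| = n ≥ 2`, every symmetric nonnegative `κ`,
every `t ∈ {1,…,n-1}` and every layer-`t` spreading metric `x` (symmetric, `[0,1]`-valued,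
zero diagonal, triangle inequality, spreading constraints), there is a partition of `V`
into blocks of size at most `⌊(1+ε)t⌋` whose total crossing weight is at most
`c(ε) · log n` times `Σ_{{i,j}} κ i j · x i j`. -/
theorem statement11 (ε : ℝ) (hε0 : 0 < ε) (hε1 : ε < 1) :
    ∃ c : ℝ, 0 < c ∧
      ∀ (V : Type) [Fintype V] [DecidableEq V], ∀ (n t : ℕ) (κ x : V → V → ℝ),
        Fintype.card V = n → 2 ≤ n → 1 ≤ t → t ≤ n - 1 →
        (∀ i j : V, κ i j = κ j i) → (∀ i j : V, 0 ≤ κ i j) →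
        (∀ i j : V, x i j = x j i) →
        (∀ i j : V, 0 ≤ x i j) → (∀ i j : V, x i j ≤ 1) →
        (∀ i : V, x i i = 0) →
        (∀ i j k : V, x i k ≤ x i j + x j k) →
        (∀ S : Finset V, ∀ i ∈ S, (S.card : ℝ) - t ≤ ∑ j ∈ S, x i j) →
        ∃ P : Finpartition (Finset.univ : Finset V),
          (∀ B ∈ P.parts, B.card ≤ ⌊(1 + ε) * (t : ℝ)⌋₊) ∧
          (1 / 2) * (∑ i : V, ∑ j : V,
              if ∃ B ∈ P.parts, i ∈ B ∧ j ∈ B then 0 else κ i j) ≤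
            c * Real.log n * ((1 / 2) * ∑ i : V, ∑ j : V, κ i j * x i j) := by
  refine ⟨4 * (1 + ε) / ε, by positivity, ?_⟩
  intro V _ _ n t κ x hcard hn ht htn hκs hκ0 hxs hx0 hx1 hxd htri hspread
  have hε1' : (0:ℝ) < 1 + ε := by linarith
  set r : ℝ := ε / (1 + ε) with hrdef
  have hr0 : 0 < r := by positivity
  have hrr : (1 + ε) * (1 - r) = 1 := by
    rw [hrdef]; field_simp; ring
  have hn2 : (2:ℝ) ≤ (n:ℝ) := by exact_mod_cast hn
  have hn0 : (0:ℝ) < (n:ℝ) := by linarith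
  have hE0 : 0 ≤ EF κ x (Finset.univ : Finset V) := EF_nonneg κ x hκ0 hx0 _
  set E := EF κ x (Finset.univ : Finset V) with hEdef
  set W₀ := E / (n:ℝ) with hW₀def
  have hW₀0 : 0 ≤ W₀ := div_nonneg hE0 hn0.le
  set C := Real.log ((n:ℝ) + 2) / (2 * r) with hCdef
  have hC0 : 0 < C := div_pos (Real.log_pos (by linarith)) (by positivity)
  have hnW : (n:ℝ) * W₀ = E := by
    rw [hW₀def]; field_simp
  have Hex : ∀ (A : Finset V) (v : V), v ∈ A →
      ∃ ρ, 0 ≤ ρ ∧ ρ < r ∧ cutF κ x A v ρ ≤ C * volF κ x W₀ A v ρ := by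
    intro A v hv
    by_cases hE' : E = 0
    · refine ⟨0, le_rfl, hr0, ?_⟩
      rw [cut_zero κ x A v hκ0 hx0 htri (by rw [← hEdef]; exact hE')]
      exact mul_nonneg hC0.le
        (le_trans hW₀0 (vol_lower κ x W₀ A v hκ0 hx0 0))
    · have hEpos : 0 < E := lt_of_le_of_ne hE0 (Ne.symm hE')
      have hW₀pos : 0 < W₀ := by rw [hW₀def]; exact div_pos hEpos hn0
      refine exists_good κ x W₀ A v hκ0 hκs hxs hx0 htri r C hr0 hC0 hW₀pos ?_
      have h2Cr : 2 * C * r = Real.log ((n:ℝ) + 2) := by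
        rw [hCdef]; field_simp
      rw [h2Cr, Real.exp_log (by linarith)]
      have hEA : EF κ x A ≤ E := by
        rw [hEdef]; exact EF_mono κ x hκ0 hx0 (Finset.subset_univ A)
      nlinarith [hW₀pos, hEA, hnW]
  have Hsize : ∀ (A : Finset V) (v : V) (ρ : ℝ), v ∈ A → 0 ≤ ρ → ρ < r →
      (ballF x A v ρ).card ≤ ⌊(1 + ε) * (t:ℝ)⌋₊ := by
    intro A v ρ hv h0 hρr
    have hvb : v ∈ ballF x A v ρ := Finset.mem_filter.mpr ⟨hv, by rw [hxd]; exact h0⟩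
    have hsum := hspread (ballF x A v ρ) v hvb
    have hub : ∑ j ∈ ballF x A v ρ, x v j ≤ (ballF x A v ρ).card • ρ :=
      Finset.sum_le_card_nsmul _ _ _ (fun u hu => (Finset.mem_filter.mp hu).2)
    rw [nsmul_eq_mul] at hub
    apply Nat.le_floor
    set m := ((ballF x A v ρ).card : ℝ) with hm
    have hm0 : (0:ℝ) ≤ m := Nat.cast_nonneg _
    have h1 : m - t ≤ m * ρ := le_trans hsum hub
    have h2 : m * (1 - r) ≤ (t:ℝ) := by
      nlinarith [mul_nonneg hm0 (by linarith : (0:ℝ) ≤ r - ρ)]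
    have h3 : (1 + ε) * (m * (1 - r)) ≤ (1 + ε) * t :=
      mul_le_mul_of_nonneg_left h2 hε1'.le
    have h4 : (1 + ε) * (m * (1 - r)) = m := by
      rw [show (1 + ε) * (m * (1 - r)) = m * ((1 + ε) * (1 - r)) from by ring, hrr,
        mul_one]
    linarith
  obtain ⟨P, hne, hsup, hdisj, hK, hcross⟩ :=
    main_ind κ x W₀ C r (⌊(1 + ε) * (t:ℝ)⌋₊) hκ0 hκs hxs hx0 hxd htri hW₀0 hC0.le Hex Hsize
      (Fintype.card V) Finset.univ (le_of_eq Finset.card_univ)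
  rw [Finset.card_univ, hcard] at hcross
  refine ⟨⟨P, Finset.supIndep_iff_pairwiseDisjoint.mpr hdisj, hsup, ?_⟩, hK, ?_⟩
  · intro hbot
    exact Finset.not_nonempty_empty (hne ⊥ hbot)
  · show (1/2) * crossF κ P Finset.univ ≤
      4 * (1 + ε) / ε * Real.log n * ((1/2) * E)
    have hlogbound : Real.log ((n:ℝ) + 2) ≤ 2 * Real.log (n:ℝ) := by
      have h1 : ((n:ℝ) + 2) ≤ (n:ℝ) ^ 2 := by nlinarith
      calc Real.log ((n:ℝ) + 2) ≤ Real.log ((n:ℝ) ^ 2) :=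
            Real.log_le_log (by linarith) h1
        _ = 2 * Real.log (n:ℝ) := by
            rw [Real.log_pow]; norm_num
    have hceq : 4 * (1 + ε) / ε = 4 / r := by
      rw [hrdef]; field_simp
    have hkey : 4 * C ≤ 4 * (1 + ε) / ε * Real.log (n:ℝ) := by
      rw [hceq]
      have hstep : (2 * Real.log ((n:ℝ) + 2)) / r ≤ (4 * Real.log (n:ℝ)) / r := by
        apply div_le_div_of_nonneg_right ?_ hr0.le
        linarith
      calc 4 * C = (2 * Real.log ((n:ℝ) + 2)) / r := by rw [hCdef]; ring
        _ ≤ (4 * Real.log (n:ℝ)) / r := hstep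
        _ = 4 / r * Real.log (n:ℝ) := by ring
    have hsum2 : E + (n:ℝ) * W₀ = 2 * E := by rw [hnW]; ring
    have hmul := mul_le_mul_of_nonneg_right hkey (by linarith : (0:ℝ) ≤ E / 2)
    nlinarith [hcross, hmul, hC0.le, hE0]
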